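/- Let R be a Lie conformal algebra over R with λ-bracket [·_λ·]. Then the bracket [a,b] := ∫_{−∂}^{0} [a_λ b] dλ (meaning: if [a_λ b] = Σ_j c_j λ^j/j! then [a,b] = −Σ_j (−∂)^{j+1} c_j/(j+1)!) makes the underlying vector space R into a Lie algebra: it is bilinear, skew-symmetric, and satisfies the Jacobi identity. -/

import Mathlib

/- STATEMENT 15: For a Lie conformal algebra R, the bracket
[a,b] := ∫_{−∂}^0 [a_λ b]dλ = −Σ_j (−∂)^{j+1}(a_{(j)}b)/(j+1)!
makes the underlying vector space into a Lie algebra: it is bilinear,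
skew-symmetric and satisfies the Jacobi identity. -/

open Finset

private lemma negpow_congr {a b : ℕ} (h : a % 2 = b % 2) : (-1:ℝ)^a = (-1:ℝ)^b := by
  conv_lhs => rw [← Nat.div_add_mod a 2]
  conv_rhs => rw [← Nat.div_add_mod b 2]
  rw [h]
  simp [pow_add, pow_mul]

private lemma desc_fact (m i : ℕ) :
    ((m+i).descFactorial i : ℝ) * (m.factorial : ℝ) = ((m+i).factorial : ℝ) := by
  have h := Nat.factorial_mul_descFactorial (show i ≤ m + i by omega)
  rw [show m + i - i = m by omega] at h
  rw [mul_comm]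
  exact_mod_cast congrArg (Nat.cast (R := ℝ)) h

private lemma alt_one (m : ℕ) :
    (∑ k ∈ range (m+1), (-1:ℝ)^k * ((m+1).choose (k+1) : ℝ)) = 1 := by
  have h0 := Int.alternating_sum_range_choose (n := m+1)
  rw [if_neg (Nat.succ_ne_zero m), Finset.sum_range_succ'] at h0
  have h1 : (∑ k ∈ range (m+1), (-1:ℤ)^k * ((m+1).choose (k+1) : ℤ)) = 1 := by
    have h2 : (∑ k ∈ range (m+1), (-1:ℤ)^(k+1) * ((m+1).choose (k+1) : ℤ))
        = -∑ k ∈ range (m+1), (-1:ℤ)^k * ((m+1).choose (k+1) : ℤ) := by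
      rw [← Finset.sum_neg_distrib]
      refine Finset.sum_congr rfl fun k _ => by ring
    rw [h2] at h0
    simp at h0
    linarith
  exact_mod_cast h1

private lemma S1 (m : ℕ) :
    ∑ k ∈ range (m+1), (-1:ℝ)^k * ((((k+1).factorial : ℝ) * ((m-k).factorial : ℝ))⁻¹)
      = (((m+1).factorial : ℝ))⁻¹ := by
  have key : ∀ k ∈ range (m+1),
      (-1:ℝ)^k * ((((k+1).factorial : ℝ) * ((m-k).factorial : ℝ))⁻¹)
        = ((-1:ℝ)^k * ((m+1).choose (k+1) : ℝ)) * (((m+1).factorial : ℝ))⁻¹ := by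
    intro k hk
    rw [mem_range] at hk
    have hc := Nat.cast_choose ℝ (show k+1 ≤ m+1 by omega)
    rw [show m + 1 - (k+1) = m - k by omega] at hc
    rw [hc]
    have f1 : ((k+1).factorial : ℝ) ≠ 0 := by positivity
    have f2 : ((m-k).factorial : ℝ) ≠ 0 := by positivity
    have f3 : ((m+1).factorial : ℝ) ≠ 0 := by positivity
    field_simp
  rw [Finset.sum_congr rfl key, ← Finset.sum_mul, alt_one, one_mul]

private lemma S2 : ∀ (k s : ℕ),
    ∑ i ∈ range (k+1), (-1:ℝ)^i * (k.choose i : ℝ) * (((s:ℝ)+i+1))⁻¹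
      = (s.factorial : ℝ) * (k.factorial : ℝ) * (((s+k+1).factorial : ℝ))⁻¹ := by
  intro k
  induction k with
  | zero =>
      intro s
      have f1 : ((s+1).factorial : ℝ) = ((s:ℝ)+1) * (s.factorial : ℝ) := by
        push_cast [Nat.factorial_succ]; ring
      have f2 : (s.factorial : ℝ) ≠ 0 := by positivity
      have f3 : ((s:ℝ)+1) ≠ 0 := by positivity
      simp [f1]
      field_simp
  | succ k IH =>
      intro s
      rw [Finset.sum_range_succ']
      push_cast
      have hsplit : ∀ i ∈ range (k+1),
          (-1:ℝ)^(i+1) * ((k+1).choose (i+1) : ℝ) * (((s:ℝ)+(i+1)+1))⁻¹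
            = -((-1:ℝ)^i * (k.choose i : ℝ) * ((((s+1:ℕ):ℝ))+i+1)⁻¹)
              + -((-1:ℝ)^i * (k.choose (i+1) : ℝ) * (((s:ℝ)+(i+1)+1))⁻¹) := by
        intro i _
        rw [Nat.choose_succ_succ]
        push_cast
        ring
      rw [Finset.sum_congr rfl hsplit, Finset.sum_add_distrib]
      have hB1 : (∑ i ∈ range (k+1), -((-1:ℝ)^i * (k.choose i : ℝ) * ((((s+1:ℕ):ℝ))+i+1)⁻¹))
          = -((((s+1:ℕ)).factorial : ℝ) * (k.factorial : ℝ) * (((s+k+2).factorial : ℝ))⁻¹) := by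
        rw [Finset.sum_neg_distrib, IH (s+1)]
        rw [show s+1+k+1 = s+k+2 by omega]
      have hg : ∀ i, (-1:ℝ)^i * (k.choose i : ℝ) * (((s:ℝ)+i+1))⁻¹
          = (-1:ℝ)^i * (k.choose i : ℝ) * (((s:ℝ)+i+1))⁻¹ := fun _ => rfl
      have hB2 : (∑ i ∈ range (k+1), -((-1:ℝ)^i * (k.choose (i+1) : ℝ) * (((s:ℝ)+(i+1)+1))⁻¹))
          = (s.factorial : ℝ) * (k.factorial : ℝ) * (((s+k+1).factorial : ℝ))⁻¹ - ((s:ℝ)+1)⁻¹ := by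
        have e1 : ∀ i ∈ range (k+1),
            -((-1:ℝ)^i * (k.choose (i+1) : ℝ) * (((s:ℝ)+(i+1)+1))⁻¹)
              = (-1:ℝ)^(i+1) * (k.choose (i+1) : ℝ) * (((s:ℝ)+(i+1)+1))⁻¹ := by
          intro i _; push_cast; ring
        rw [Finset.sum_congr rfl e1]
        have e2 : (∑ i ∈ range (k+2), (-1:ℝ)^i * (k.choose i : ℝ) * (((s:ℝ)+i+1))⁻¹)
            = (∑ i ∈ range (k+1), (-1:ℝ)^(i+1) * (k.choose (i+1) : ℝ) * (((s:ℝ)+(i+1)+1))⁻¹)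
              + (-1:ℝ)^0 * (k.choose 0 : ℝ) * (((s:ℝ)+0+1))⁻¹ := by
          rw [Finset.sum_range_succ']
          push_cast
          ring_nf
        have e3 : (∑ i ∈ range (k+2), (-1:ℝ)^i * (k.choose i : ℝ) * (((s:ℝ)+i+1))⁻¹)
            = (s.factorial : ℝ) * (k.factorial : ℝ) * (((s+k+1).factorial : ℝ))⁻¹ := by
          rw [Finset.sum_range_succ, IH s]
          simp [Nat.choose_eq_zero_of_lt (show k < k+1 by omega)]
        rw [e3] at e2
        simp only [pow_zero, Nat.choose_zero_right, Nat.cast_one, one_mul] at e2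
        rw [show ((s:ℝ)+0+1)⁻¹ = ((s:ℝ)+1)⁻¹ by norm_num] at e2
        linarith
      rw [hB1, hB2]
      have f2 : (s.factorial : ℝ) ≠ 0 := by positivity
      have f4 : ((s+k+1).factorial : ℝ) ≠ 0 := by positivity
      have f5 : ((s+k+2).factorial : ℝ) ≠ 0 := by positivity
      have g1 : ((s+k+2).factorial : ℝ) = ((s:ℝ)+k+2) * ((s+k+1).factorial : ℝ) := by
        rw [show s+k+2 = (s+k+1)+1 by omega]
        push_cast [Nat.factorial_succ]
        ring
      have g2 : (((s+1:ℕ)).factorial : ℝ) = ((s:ℝ)+1) * (s.factorial : ℝ) := by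
        push_cast [Nat.factorial_succ]; ring
      have g3 : (((k+1:ℕ)).factorial : ℝ) = ((k:ℝ)+1) * (k.factorial : ℝ) := by
        push_cast [Nat.factorial_succ]; ring
      rw [show s+(k+1)+1 = s+k+2 by omega, g1, g2, g3]
      have f6 : ((s:ℝ)+k+2) ≠ 0 := by positivity
      simp only [Nat.choose_zero_right, Nat.cast_one]
      field_simp
      ring

private lemma hockey (j t : ℕ) :
    ∑ k ∈ range (t+1), (j+k).choose j = (t+j+1).choose (j+1) := by
  have h := Nat.sum_Icc_choose (j+t) j
  rw [show Finset.Icc j (j+t) = Finset.Ico j (j+t+1) by rw [Finset.Ico_add_one_right_eq_Icc]] at h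
  rw [Finset.sum_Ico_eq_sum_range] at h
  rw [show j+t+1-j = t+1 by omega] at h
  rw [show t+j+1 = j+t+1 by omega]
  exact h

private lemma finsum_range {M : Type*} [AddCommMonoid M] (F : ℕ → M) (N : ℕ)
    (h : ∀ j, N ≤ j → F j = 0) : ∑ᶠ j, F j = ∑ j ∈ range N, F j := by
  apply finsum_eq_sum_of_support_subset
  intro x hx
  simp only [Finset.coe_range, Set.mem_Iio]
  by_contra hc
  exact hx (h x (by omega))

private lemma shift_sum {M : Type*} [AddCommMonoid M] (F : ℕ → M) (i R : ℕ) (hiR : i ≤ R)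
    (h0 : ∀ m, m < i → F m = 0) (ht : ∀ s, R - i ≤ s → F (i+s) = 0) :
    ∑ m ∈ range R, F m = ∑ s ∈ range R, F (i+s) := by
  have e1 : ∑ m ∈ range R, F m = ∑ m ∈ Finset.Ico i R, F m := by
    rw [Finset.range_eq_Ico, ← Finset.sum_Ico_consecutive _ (Nat.zero_le i) hiR,
      Finset.sum_eq_zero (fun m hm => h0 m (Finset.mem_Ico.mp hm).2), zero_add]
  rw [e1, Finset.sum_Ico_eq_sum_range]
  exact Finset.sum_subset (Finset.range_subset_range.mpr (Nat.sub_le R i))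
    (fun s _ hns => ht s (by simpa using hns))

private lemma diag_sum {M : Type*} [AddCommMonoid M] (F : ℕ → ℕ → M) (R : ℕ)
    (hF : ∀ k n, R ≤ k + n → F k n = 0) :
    ∑ k ∈ range R, ∑ n ∈ range R, F k n = ∑ t ∈ range R, ∑ k ∈ range (t+1), F k (t-k) := by
  rw [Finset.sum_range_diag_flip R F]
  refine Finset.sum_congr rfl fun k hk => ?_
  rw [mem_range] at hk
  exact (Finset.sum_subset (Finset.range_subset_range.mpr (by omega))
    (fun n hn hns => hF k n (by rw [mem_range] at hn hns; omega))).symm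

section LCA

variable {V : Type*} [AddCommGroup V] [Module ℝ V] (D : Module.End ℝ V)
  (p : ℕ → V →ₗ[ℝ] V →ₗ[ℝ] V)

private lemma L0a
    (hsesq2 : ∀ f g : V, p 0 f (D g) = D (p 0 f g))
    (hsesq2' : ∀ (f g : V) (j : ℕ),
      p (j + 1) f (D g) = D (p (j + 1) f g) + (((j : ℝ) + 1)) • p j f g)
    (m : ℕ) (f x : V) :
    p m f (D x) = D (p m f x) + (m:ℝ) • p (m-1) f x := by
  cases m with
  | zero => simpa using hsesq2 f x
  | succ j => simpa [Nat.succ_sub_one] using hsesq2' f x j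

private lemma L0b
    (hsesq0 : ∀ f g : V, p 0 (D f) g = 0)
    (hsesq1 : ∀ (f g : V) (j : ℕ),
      p (j + 1) (D f) g = -(((j : ℝ) + 1)) • p j f g)
    (m : ℕ) (f x : V) :
    p m (D f) x = -(m:ℝ) • p (m-1) f x := by
  cases m with
  | zero => simpa using hsesq0 f x
  | succ j => simpa [Nat.succ_sub_one] using hsesq1 f x j

private lemma L1
    (hsesq2 : ∀ f g : V, p 0 f (D g) = D (p 0 f g))
    (hsesq2' : ∀ (f g : V) (j : ℕ),
      p (j + 1) f (D g) = D (p (j + 1) f g) + (((j : ℝ) + 1)) • p j f g) :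
    ∀ (k m : ℕ) (f x : V), p m f ((D^k) x)
      = ∑ i ∈ range (k+1), ((k.choose i * m.descFactorial i : ℕ) : ℝ) • (D^(k-i)) (p (m-i) f x) := by
  intro k
  induction k with
  | zero => intro m f x; simp
  | succ k IH =>
      intro m f x
      have hDk : (D^(k+1)) x = (D^k) (D x) := by
        rw [pow_succ]; rfl
      rw [hDk, IH m f (D x)]
      have step1 : ∀ i ∈ range (k+1),
          ((k.choose i * m.descFactorial i : ℕ) : ℝ) • (D^(k-i)) (p (m-i) f (D x))
            = ((k.choose i * m.descFactorial i : ℕ) : ℝ) • (D^((k-i)+1)) (p (m-i) f x)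
              + ((k.choose i * m.descFactorial (i+1) : ℕ) : ℝ) • (D^(k-i)) (p (m-(i+1)) f x) := by
        intro i _
        rw [L0a D p hsesq2 hsesq2' (m-i) f x]
        rw [map_add, smul_add]
        have hD : (D^(k-i)) (D (p (m-i) f x)) = (D^((k-i)+1)) (p (m-i) f x) := by
          rw [pow_succ]; rfl
        rw [hD]
        congr 1
        rw [map_smul, smul_smul]
        have hco : (k.choose i * m.descFactorial i) * (m - i) = k.choose i * m.descFactorial (i+1) := by
          rw [Nat.descFactorial_succ]; ring
        have hsub : m - i - 1 = m - (i+1) := by omega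
        rw [hsub, ← hco]
        push_cast
        ring_nf
      rw [Finset.sum_congr rfl step1, Finset.sum_add_distrib]
      -- RHS side
      rw [Finset.sum_range_succ' (fun i => (((k+1).choose i * m.descFactorial i : ℕ) : ℝ) • (D^(k+1-i)) (p (m-i) f x)) (k+1)]
      have hA : (∑ i ∈ range (k+1), ((k.choose i * m.descFactorial i : ℕ) : ℝ) • (D^((k-i)+1)) (p (m-i) f x))
          = (((k+1).choose 0 * m.descFactorial 0 : ℕ) : ℝ) • (D^(k+1-0)) (p (m-0) f x)
            + ∑ i ∈ range (k+1), ((k.choose (i+1) * m.descFactorial (i+1) : ℕ) : ℝ) • (D^(k-i)) (p (m-(i+1)) f x) := by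
        have e1 : ∀ i ∈ range (k+1),
            ((k.choose i * m.descFactorial i : ℕ) : ℝ) • (D^((k-i)+1)) (p (m-i) f x)
              = ((k.choose i * m.descFactorial i : ℕ) : ℝ) • (D^(k+1-i)) (p (m-i) f x) := by
          intro i hi
          rw [mem_range] at hi
          rw [show (k-i)+1 = k+1-i by omega]
        rw [Finset.sum_congr rfl e1,
          Finset.sum_range_succ' (fun i => ((k.choose i * m.descFactorial i : ℕ) : ℝ) • (D^(k+1-i)) (p (m-i) f x)) k]
        rw [Finset.sum_range_succ (fun i => ((k.choose (i+1) * m.descFactorial (i+1) : ℕ) : ℝ) • (D^(k-i)) (p (m-(i+1)) f x)) k]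
        rw [Nat.choose_succ_self, Nat.zero_mul, Nat.cast_zero, zero_smul, add_zero]
        have e2 : ∀ i ∈ range k,
            ((k.choose (i+1) * m.descFactorial (i+1) : ℕ) : ℝ) • (D^(k+1-(i+1))) (p (m-(i+1)) f x)
              = ((k.choose (i+1) * m.descFactorial (i+1) : ℕ) : ℝ) • (D^(k-i)) (p (m-(i+1)) f x) := by
          intro i hi
          rw [show k+1-(i+1) = k-i by omega]
        rw [Finset.sum_congr rfl e2]
        simp [add_comm]
      rw [hA]
      have hB : ∀ i ∈ range (k+1),
          (((k+1).choose (i+1) * m.descFactorial (i+1) : ℕ) : ℝ) • (D^(k+1-(i+1))) (p (m-(i+1)) f x)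
            = ((k.choose (i+1) * m.descFactorial (i+1) : ℕ) : ℝ) • (D^(k-i)) (p (m-(i+1)) f x)
              + ((k.choose i * m.descFactorial (i+1) : ℕ) : ℝ) • (D^(k-i)) (p (m-(i+1)) f x) := by
        intro i _
        rw [show (k+1).choose (i+1) * m.descFactorial (i+1)
              = k.choose (i+1) * m.descFactorial (i+1) + k.choose i * m.descFactorial (i+1) by
            rw [Nat.choose_succ_succ]; ring,
          Nat.cast_add, add_smul, show k+1-(i+1) = k-i by omega]
      rw [Finset.sum_congr rfl hB, Finset.sum_add_distrib]
      abel

private lemma L2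
    (hsesq0 : ∀ f g : V, p 0 (D f) g = 0)
    (hsesq1 : ∀ (f g : V) (j : ℕ),
      p (j + 1) (D f) g = -(((j : ℝ) + 1)) • p j f g) :
    ∀ (k m : ℕ) (f x : V), p m ((D^k) f) x
      = ((-1:ℝ)^k * (m.descFactorial k : ℕ)) • p (m-k) f x := by
  intro k
  induction k with
  | zero => intro m f x; simp
  | succ k IH =>
      intro m f x
      have hDk : (D^(k+1)) f = (D^k) (D f) := by
        rw [pow_succ]; rfl
      rw [hDk, IH m (D f) x, L0b D p hsesq0 hsesq1 (m-k) f x, smul_smul]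
      rw [show m - k - 1 = m - (k+1) by omega]
      congr 1
      have hco : m.descFactorial (k+1) = (m - k) * m.descFactorial k := Nat.descFactorial_succ m k
      rw [hco]
      push_cast [Nat.cast_mul]
      ring

end LCA
section BRK

open Finset

variable {V : Type*} [AddCommGroup V] [Module ℝ V] (D : Module.End ℝ V)
  (p : ℕ → V →ₗ[ℝ] V →ₗ[ℝ] V)

private noncomputable def brk (a b : V) : V :=
  - ∑ᶠ j : ℕ, (((j + 1).factorial : ℝ)⁻¹) • ((-D) ^ (j + 1)) (p j a b)

private lemma br_sum (a b : V) (N : ℕ) (h : ∀ j, N ≤ j → p j a b = 0) :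
    brk D p a b = -∑ j ∈ range N, (((j + 1).factorial : ℝ)⁻¹) • ((-D) ^ (j + 1)) (p j a b) := by
  unfold brk
  congr 1
  apply finsum_range
  intro j hj
  rw [h j hj]
  simp

private lemma br_addl (hfin : ∀ f g : V, ∃ N, ∀ j ≥ N, p j f g = 0) (a b c : V) :
    brk D p (a + b) c = brk D p a c + brk D p b c := by
  obtain ⟨N1, h1⟩ := hfin a c
  obtain ⟨N2, h2⟩ := hfin b c
  set N := max N1 N2 with hN
  have hab : ∀ j, N ≤ j → p j (a + b) c = 0 := by
    intro j hj
    rw [map_add, LinearMap.add_apply, h1 j (by omega), h2 j (by omega), add_zero]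
  rw [br_sum D p _ _ N hab, br_sum D p a c N (fun j hj => h1 j (by omega)),
    br_sum D p b c N (fun j hj => h2 j (by omega))]
  rw [← neg_add, ← Finset.sum_add_distrib]
  congr 1
  refine Finset.sum_congr rfl fun j _ => ?_
  rw [map_add, LinearMap.add_apply, map_add, smul_add]

private lemma br_addr (hfin : ∀ f g : V, ∃ N, ∀ j ≥ N, p j f g = 0) (a b c : V) :
    brk D p a (b + c) = brk D p a b + brk D p a c := by
  obtain ⟨N1, h1⟩ := hfin a b
  obtain ⟨N2, h2⟩ := hfin a c
  set N := max N1 N2 with hN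
  have hab : ∀ j, N ≤ j → p j a (b + c) = 0 := by
    intro j hj
    rw [map_add, h1 j (by omega), h2 j (by omega), add_zero]
  rw [br_sum D p _ _ N hab, br_sum D p a b N (fun j hj => h1 j (by omega)),
    br_sum D p a c N (fun j hj => h2 j (by omega))]
  rw [← neg_add, ← Finset.sum_add_distrib]
  congr 1
  refine Finset.sum_congr rfl fun j _ => ?_
  rw [map_add, map_add, smul_add]

private lemma br_smull (hfin : ∀ f g : V, ∃ N, ∀ j ≥ N, p j f g = 0) (r : ℝ) (a b : V) :
    brk D p (r • a) b = r • brk D p a b := by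
  obtain ⟨N, h⟩ := hfin a b
  have hra : ∀ j, N ≤ j → p j (r • a) b = 0 := by
    intro j hj
    rw [map_smul, LinearMap.smul_apply, h j hj, smul_zero]
  rw [br_sum D p _ _ N hra, br_sum D p a b N (fun j hj => h j hj)]
  rw [smul_neg, Finset.smul_sum]
  congr 1
  refine Finset.sum_congr rfl fun j _ => ?_
  rw [map_smul, LinearMap.smul_apply, map_smul, smul_comm]

private lemma br_smulr (hfin : ∀ f g : V, ∃ N, ∀ j ≥ N, p j f g = 0) (r : ℝ) (a b : V) :
    brk D p a (r • b) = r • brk D p a b := by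
  obtain ⟨N, h⟩ := hfin a b
  have hra : ∀ j, N ≤ j → p j a (r • b) = 0 := by
    intro j hj
    rw [map_smul, h j hj, smul_zero]
  rw [br_sum D p _ _ N hra, br_sum D p a b N (fun j hj => h j hj)]
  rw [smul_neg, Finset.smul_sum]
  congr 1
  refine Finset.sum_congr rfl fun j _ => ?_
  rw [map_smul, map_smul, smul_comm]

end BRK
section BRK2

open Finset

variable {V : Type*} [AddCommGroup V] [Module ℝ V] (D : Module.End ℝ V)
  (p : ℕ → V →ₗ[ℝ] V →ₗ[ℝ] V)

private lemma br_skew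
    (hfin : ∀ f g : V, ∃ N, ∀ j ≥ N, p j f g = 0)
    (hskew : ∀ (f g : V) (j : ℕ),
      p j f g = -((-1 : ℝ) ^ j) •
        ∑ᶠ i : ℕ, ((i.factorial : ℝ)⁻¹) • ((-D) ^ i) (p (j + i) g f))
    (a b : V) : brk D p a b = - brk D p b a := by
  obtain ⟨N1, h1⟩ := hfin a b
  obtain ⟨N2, h2⟩ := hfin b a
  set N := max N1 N2 with hNdef
  have hab : ∀ j, N ≤ j → p j a b = 0 := fun j hj => h1 j (by omega)
  have hba : ∀ j, N ≤ j → p j b a = 0 := fun j hj => h2 j (by omega)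
  rw [br_sum D p a b N hab, br_sum D p b a N hba, neg_neg]
  -- G j i
  set G : ℕ → ℕ → V := fun j i =>
    ((-1:ℝ)^j * ((((j+1).factorial : ℝ) * ((i.factorial : ℝ)))⁻¹)) •
      ((-D)^(j+i+1)) (p (j+i) b a) with hG
  have key : ∀ j ∈ range N,
      (((j + 1).factorial : ℝ)⁻¹) • ((-D)^(j+1)) (p j a b) = -∑ i ∈ range N, G j i := by
    intro j _
    rw [hskew a b j]
    rw [finsum_range (fun i => ((i.factorial : ℝ)⁻¹) • ((-D)^i) (p (j+i) b a)) N
      (fun i hi => by have h0 := hba (j+i) (by omega); simp [h0])]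
    rw [map_smul, smul_smul, map_sum, Finset.smul_sum]
    rw [← Finset.sum_neg_distrib]
    refine Finset.sum_congr rfl fun i _ => ?_
    rw [map_smul, smul_smul, hG]
    have hpow : ((-D)^(j+1)) (((-D)^i) (p (j+i) b a)) = ((-D)^(j+i+1)) (p (j+i) b a) := by
      rw [show j+i+1 = (j+1)+i by omega, pow_add (-D) (j+1) i]
      rfl
    rw [hpow, ← neg_smul]
    congr 1
    have f1 : ((j+1).factorial : ℝ) ≠ 0 := by positivity
    have f2 : ((i).factorial : ℝ) ≠ 0 := by positivity
    field_simp
  rw [Finset.sum_congr rfl key, Finset.sum_neg_distrib, neg_neg]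
  have hGzero : ∀ k n, N ≤ k + n → G k n = 0 := by
    intro k n hkn
    rw [hG]
    simp only
    rw [hba (k+n) hkn, map_zero, smul_zero]
  rw [diag_sum G N hGzero]
  refine Finset.sum_congr rfl fun t ht => ?_
  have e1 : ∀ k ∈ range (t+1),
      G k (t-k) = ((-1:ℝ)^k * ((((k+1).factorial : ℝ) * (((t-k).factorial : ℝ)))⁻¹)) •
        ((-D)^(t+1)) (p t b a) := by
    intro k hk
    rw [mem_range] at hk
    rw [hG]
    simp only
    rw [show k+(t-k) = t by omega]
  rw [Finset.sum_congr rfl e1, ← Finset.sum_smul, S1 t]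

end BRK2
section JAC

open Finset

private lemma SC (s n : ℕ) :
    ∑ i ∈ range (n+2),
      ((((s+i) + 1).factorial : ℝ))⁻¹ * (((n + 1).factorial : ℝ))⁻¹ * ((-1:ℝ)^(n+1))
        * ((((n+1).choose i * (s+i).descFactorial i : ℕ)) : ℝ) * ((-1:ℝ)^((s+i)+1))
      = ((-1:ℝ)^(s+n)) * (((s+n+2).factorial : ℝ))⁻¹ := by
  have e1 : ∀ i ∈ range (n+2),
      ((((s+i) + 1).factorial : ℝ))⁻¹ * (((n + 1).factorial : ℝ))⁻¹ * ((-1:ℝ)^(n+1))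
        * ((((n+1).choose i * (s+i).descFactorial i : ℕ)) : ℝ) * ((-1:ℝ)^((s+i)+1))
      = ((-1:ℝ)^(s+n) * ((s.factorial : ℝ)⁻¹ * (((n+1).factorial : ℝ))⁻¹))
          * ((-1:ℝ)^i * (((n+1).choose i : ℕ) : ℝ) * (((s:ℝ)+i+1))⁻¹) := by
    intro i _
    have hsign : ((-1:ℝ)^(n+1)) * ((-1:ℝ)^((s+i)+1)) = ((-1:ℝ)^(s+n)) * ((-1:ℝ)^i) := by
      rw [← pow_add, ← pow_add]
      exact negpow_congr (by omega)
    have hdesc := desc_fact s i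
    have hfs : (((s+i) + 1).factorial : ℝ) = (((s:ℝ)+i+1)) * (((s+i).factorial : ℝ)) := by
      rw [Nat.factorial_succ]
      push_cast
      ring
    have f1 : (s.factorial : ℝ) ≠ 0 := by positivity
    have f2 : ((s+i).factorial : ℝ) ≠ 0 := by positivity
    have f3 : (((n+1)).factorial : ℝ) ≠ 0 := by positivity
    have f4 : ((s:ℝ)+i+1) ≠ 0 := by positivity
    rw [Nat.cast_mul, hfs, ← hdesc]
    have hd0 : ((s+i).descFactorial i : ℝ) ≠ 0 := by
      intro h0; rw [h0, zero_mul] at hdesc; exact f2 hdesc.symm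
    calc _ = ((-1:ℝ)^(n+1) * (-1:ℝ)^((s+i)+1))
          * (((s+i).descFactorial i : ℝ) * ((s+i).descFactorial i : ℝ)⁻¹)
          * ((((n+1).choose i : ℕ) : ℝ) * ((s:ℝ)+i+1)⁻¹ * (s.factorial : ℝ)⁻¹
            * ((n+1).factorial : ℝ)⁻¹) := by rw [mul_inv, mul_inv]; ring
      _ = _ := by rw [hsign, mul_inv_cancel₀ hd0]; ring
  rw [Finset.sum_congr rfl e1, ← Finset.mul_sum, S2 (n+1) s]
  have f1 : (s.factorial : ℝ) ≠ 0 := by positivity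
  have f3 : (((n+1)).factorial : ℝ) ≠ 0 := by positivity
  have f5 : (((s+n+2)).factorial : ℝ) ≠ 0 := by
    positivity
  rw [show s+(n+1)+1 = s+n+2 by omega]
  field_simp

end JAC
section KEYA

open Finset

variable {V : Type*} [AddCommGroup V] [Module ℝ V] (D : Module.End ℝ V)
  (p : ℕ → V →ₗ[ℝ] V →ₗ[ℝ] V)

private lemma keyA
    (hsesq2 : ∀ f g : V, p 0 f (D g) = D (p 0 f g))
    (hsesq2' : ∀ (f g : V) (j : ℕ),
      p (j + 1) f (D g) = D (p (j + 1) f g) + (((j : ℝ) + 1)) • p j f g)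
    (x y z : V) (B R : ℕ) (hR : R = 2*B+4)
    (hyz : ∀ j, B ≤ j → p j y z = 0)
    (hq : ∀ n s, B ≤ s → p s x (p n y z) = 0)
    (hbr : ∀ m, B ≤ m → p m x (brk D p y z) = 0) :
    brk D p x (brk D p y z)
      = ∑ n ∈ range R, ∑ m ∈ range R,
          (((m+n+2).factorial : ℝ)⁻¹) • ((-D)^(m+n+2)) (p m x (p n y z)) := by
  have hnd : ∀ (k : ℕ) (v : V), ((-D)^k) v = ((-1:ℝ)^k) • (D^k) v := by
    intro k v
    rw [show (-D) = ((-1:ℝ) • D) by rw [neg_one_smul], smul_pow]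
    rfl
  have hdd : ∀ (a b : ℕ) (v : V), (D^a) ((D^b) v) = (D^(a+b)) v := by
    intro a b v
    rw [pow_add]
    rfl
  have L1g := L1 D p hsesq2 hsesq2'
  rw [br_sum D p x (brk D p y z) R (fun m hm => hbr m (by omega))]
  have E1 : ∀ m ∈ range R,
      (((m + 1).factorial : ℝ)⁻¹) • ((-D)^(m+1)) (p m x (brk D p y z))
        = -∑ n ∈ range R, ∑ i ∈ range (n+2),
            ((((m + 1).factorial : ℝ))⁻¹ * (((n + 1).factorial : ℝ))⁻¹ * ((-1:ℝ)^(n+1))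
              * ((((n+1).choose i * m.descFactorial i : ℕ)) : ℝ) * ((-1:ℝ)^(m+1)))
              • (D^(m+n+2-i)) (p (m-i) x (p n y z)) := by
    intro m hm
    rw [br_sum D p y z R (fun n hn => hyz n (by omega))]
    rw [map_neg, map_neg, smul_neg]
    refine neg_inj.mpr ?_
    rw [map_sum, map_sum, Finset.smul_sum]
    refine Finset.sum_congr rfl fun n hn => ?_
    rw [map_smul, hnd (n+1), map_smul (p m x) ((-1:ℝ)^(n+1)) ((D^(n+1)) (p n y z)), L1g (n+1) m x (p n y z)]
    rw [map_smul, map_smul, map_sum, Finset.smul_sum, Finset.smul_sum, Finset.smul_sum]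
    refine Finset.sum_congr rfl fun i hi => ?_
    rw [mem_range] at hn hi
    rw [map_smul, hnd (m+1), hdd]
    rw [show (m+1)+(n+1-i) = m+n+2-i by omega]
    module
  rw [Finset.sum_congr rfl E1, Finset.sum_neg_distrib, neg_neg]
  -- now reorganize
  rw [Finset.sum_comm]
  refine Finset.sum_congr rfl fun n hn => ?_
  rw [mem_range] at hn
  -- swap m and i
  have hswap : (∑ m ∈ range R, ∑ i ∈ range (n+2),
      ((((m + 1).factorial : ℝ))⁻¹ * (((n + 1).factorial : ℝ))⁻¹ * ((-1:ℝ)^(n+1))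
        * ((((n+1).choose i * m.descFactorial i : ℕ)) : ℝ) * ((-1:ℝ)^(m+1)))
        • (D^(m+n+2-i)) (p (m-i) x (p n y z)))
      = ∑ i ∈ range (n+2), ∑ m ∈ range R,
      ((((m + 1).factorial : ℝ))⁻¹ * (((n + 1).factorial : ℝ))⁻¹ * ((-1:ℝ)^(n+1))
        * ((((n+1).choose i * m.descFactorial i : ℕ)) : ℝ) * ((-1:ℝ)^(m+1)))
        • (D^(m+n+2-i)) (p (m-i) x (p n y z)) := Finset.sum_comm
  rw [hswap]
  have E2 : ∀ i ∈ range (n+2),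
      (∑ m ∈ range R,
        ((((m + 1).factorial : ℝ))⁻¹ * (((n + 1).factorial : ℝ))⁻¹ * ((-1:ℝ)^(n+1))
          * ((((n+1).choose i * m.descFactorial i : ℕ)) : ℝ) * ((-1:ℝ)^(m+1)))
          • (D^(m+n+2-i)) (p (m-i) x (p n y z)))
      = ∑ s ∈ range R,
        (((((s+i) + 1).factorial : ℝ))⁻¹ * (((n + 1).factorial : ℝ))⁻¹ * ((-1:ℝ)^(n+1))
          * ((((n+1).choose i * (s+i).descFactorial i : ℕ)) : ℝ) * ((-1:ℝ)^((s+i)+1)))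
          • (D^(s+n+2)) (p s x (p n y z)) := by
    intro i hi
    rw [mem_range] at hi
    rw [shift_sum _ i R (by omega)
      (fun m hm => by
        rw [Nat.descFactorial_eq_zero_iff_lt.mpr hm]
        simp)
      (fun s hs => by
        by_cases hnB : B ≤ n
        · rw [hyz n hnB]
          simp
        · rw [hq n ((i+s)-i) (by omega)]
          simp)]
    refine Finset.sum_congr rfl fun s hs => ?_
    rw [show (i+s)-i = s by omega, show (i+s)+n+2-i = s+n+2 by omega, show i+s = s+i by omega]
  rw [Finset.sum_congr rfl E2]
  -- swap back
  rw [Finset.sum_comm]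
  refine Finset.sum_congr rfl fun s hs => ?_
  rw [← Finset.sum_smul, SC s n, hnd (s+n+2)]
  rw [show s+n+2 = n+s+2 by omega]  -- careful: target has m+n+2 with m:=s? check
  rw [smul_smul]
  congr 1
  rw [show (-1:ℝ)^(n+s+2) = (-1:ℝ)^(s+n) from negpow_congr (by omega)]
  ring

end KEYA
section KEYB

open Finset

private lemma SB (s m : ℕ) :
    ((((s+(m+1)) + 1).factorial : ℝ))⁻¹ * (((m + 1).factorial : ℝ))⁻¹
        * (((s+(m+1)).descFactorial (m+1) : ℕ) : ℝ)
      = (((s+m+1).choose (m+1) : ℕ) : ℝ) * (((s+m+2).factorial : ℝ))⁻¹ := by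
  have f1 : (s.factorial : ℝ) ≠ 0 := by positivity
  have f3 : ((m+1).factorial : ℝ) ≠ 0 := by positivity
  have f4 : ((s+m+2).factorial : ℝ) ≠ 0 := by positivity
  have hdesc : (((s+(m+1)).descFactorial (m+1) : ℕ) : ℝ)
      = (((s+(m+1)).factorial : ℝ)) / (s.factorial : ℝ) := by
    rw [eq_div_iff f1]
    exact desc_fact s (m+1)
  have hch := Nat.cast_choose ℝ (show m+1 ≤ s+m+1 by omega)
  rw [show s+m+1-(m+1) = s by omega] at hch
  rw [hdesc, hch, show s+(m+1)+1 = s+m+2 by omega, show s+(m+1) = s+m+1 by omega]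
  have f2 : ((s+m+1).factorial : ℝ) ≠ 0 := by positivity
  rw [div_eq_mul_inv, div_eq_mul_inv, mul_inv]
  ring

variable {V : Type*} [AddCommGroup V] [Module ℝ V] (D : Module.End ℝ V)
  (p : ℕ → V →ₗ[ℝ] V →ₗ[ℝ] V)

private lemma keyB
    (hsesq0 : ∀ f g : V, p 0 (D f) g = 0)
    (hsesq1 : ∀ (f g : V) (j : ℕ),
      p (j + 1) (D f) g = -(((j : ℝ) + 1)) • p j f g)
    (x y z : V) (B R : ℕ) (hR : R = 2*B+4)
    (hxy : ∀ j, B ≤ j → p j x y = 0)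
    (hq : ∀ m t, B ≤ t → p t (p m x y) z = 0)
    (hbr : ∀ n, B ≤ n → p n (brk D p x y) z = 0) :
    brk D p (brk D p x y) z
      = ∑ m ∈ range R, ∑ t ∈ range R,
          ((((t+m+1).choose (m+1) : ℕ) : ℝ) * (((t+m+2).factorial : ℝ))⁻¹)
            • ((-D)^(t+m+2)) (p t (p m x y) z) := by
  have hnd : ∀ (k : ℕ) (v : V), ((-D)^k) v = ((-1:ℝ)^k) • (D^k) v := by
    intro k v
    rw [show (-D) = ((-1:ℝ) • D) by rw [neg_one_smul], smul_pow]
    rfl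
  have L2g := L2 D p hsesq0 hsesq1
  rw [br_sum D p (brk D p x y) z R (fun n hn => hbr n (by omega))]
  have E1 : ∀ n ∈ range R,
      (((n + 1).factorial : ℝ)⁻¹) • ((-D)^(n+1)) (p n (brk D p x y) z)
        = -∑ m ∈ range R,
            ((((n + 1).factorial : ℝ))⁻¹ * (((m + 1).factorial : ℝ))⁻¹
              * ((n.descFactorial (m+1) : ℕ) : ℝ))
              • ((-D)^(n+1)) (p (n-(m+1)) (p m x y) z) := by
    intro n hn
    rw [br_sum D p x y R (fun m hm => hxy m (by omega))]
    rw [map_neg, LinearMap.neg_apply, map_neg, smul_neg]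
    refine neg_inj.mpr ?_
    rw [map_sum, LinearMap.sum_apply, map_sum, Finset.smul_sum]
    refine Finset.sum_congr rfl fun m hm => ?_
    rw [hnd (m+1) (p m x y)]
    rw [map_smul (p n) ((((m + 1).factorial : ℝ))⁻¹), LinearMap.smul_apply]
    rw [map_smul (p n) ((-1:ℝ)^(m+1)), LinearMap.smul_apply]
    rw [L2g (m+1) n (p m x y) z]
    have h2 : ((-1:ℝ)^(m+1)) * ((-1:ℝ)^(m+1)) = 1 := by
      rw [← pow_add, show ((-1:ℝ))^((m+1)+(m+1)) = (-1:ℝ)^0 from negpow_congr (by omega),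
        pow_zero]
    rw [smul_smul ((-1:ℝ)^(m+1)), ← mul_assoc, h2, one_mul]
    rw [map_smul ((-D)^(n+1)) ((((m + 1).factorial : ℝ))⁻¹),
      map_smul ((-D)^(n+1)) (((n.descFactorial (m+1) : ℕ)) : ℝ), smul_smul, smul_smul]
  rw [Finset.sum_congr rfl E1, Finset.sum_neg_distrib, neg_neg]
  rw [Finset.sum_comm]
  refine Finset.sum_congr rfl fun m hm => ?_
  rw [mem_range] at hm
  rw [shift_sum _ (m+1) R (by omega)
    (fun n hn => by
      rw [Nat.descFactorial_eq_zero_iff_lt.mpr hn]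
      simp)
    (fun s hs => by
      by_cases hmB : B ≤ m
      · rw [hxy m hmB]
        simp
      · rw [hq m (((m+1)+s)-(m+1)) (by omega)]
        simp)]
  refine Finset.sum_congr rfl fun s hs => ?_
  rw [show ((m+1)+s)-(m+1) = s by omega, show (m+1)+s = s+(m+1) by omega, SB s m]
  rw [show s+(m+1)+1 = s+m+2 by omega]
end KEYB
section JACOBI

open Finset

variable {V : Type*} [AddCommGroup V] [Module ℝ V] (D : Module.End ℝ V)
  (p : ℕ → V →ₗ[ℝ] V →ₗ[ℝ] V)

private lemma br_jacobi
    (hfin : ∀ f g : V, ∃ N, ∀ j ≥ N, p j f g = 0)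
    (hsesq0 : ∀ f g : V, p 0 (D f) g = 0)
    (hsesq1 : ∀ (f g : V) (j : ℕ),
      p (j + 1) (D f) g = -(((j : ℝ) + 1)) • p j f g)
    (hsesq2 : ∀ f g : V, p 0 f (D g) = D (p 0 f g))
    (hsesq2' : ∀ (f g : V) (j : ℕ),
      p (j + 1) f (D g) = D (p (j + 1) f g) + (((j : ℝ) + 1)) • p j f g)
    (hjac : ∀ (f g h : V) (m n : ℕ),
      p m f (p n g h) =
        (∑ j ∈ Finset.range (m + 1), (m.choose j) • p (m + n - j) (p j f g) h)
          + p n g (p m f h))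
    (a b c : V) :
    brk D p a (brk D p b c) = brk D p (brk D p a b) c + brk D p b (brk D p a c) := by
  classical
  obtain ⟨N1, hN1⟩ := hfin b c
  obtain ⟨N2, hN2⟩ := hfin a c
  obtain ⟨N3, hN3⟩ := hfin a b
  obtain ⟨M1, hM1⟩ := hfin a (brk D p b c)
  obtain ⟨M2, hM2⟩ := hfin b (brk D p a c)
  obtain ⟨M3, hM3⟩ := hfin (brk D p a b) c
  choose K1 hK1 using fun n => hfin a (p n b c)
  choose K2 hK2 using fun n => hfin b (p n a c)
  choose K3 hK3 using fun n => hfin (p n a b) c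
  set B0 := N1 + N2 + N3 with hB0
  set S1 := (range B0).sup K1 with hS1
  set S2 := (range B0).sup K2 with hS2
  set S3 := (range B0).sup K3 with hS3
  set B := B0 + M1 + M2 + M3 + S1 + S2 + S3 with hB
  have hbc : ∀ j, B ≤ j → p j b c = 0 := fun j hj => hN1 j (by omega)
  have hac : ∀ j, B ≤ j → p j a c = 0 := fun j hj => hN2 j (by omega)
  have hab : ∀ j, B ≤ j → p j a b = 0 := fun j hj => hN3 j (by omega)
  have hq1 : ∀ n s, B ≤ s → p s a (p n b c) = 0 := by
    intro n s hs
    by_cases hn : n < B0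
    · have hle : K1 n ≤ S1 := Finset.le_sup (Finset.mem_range.mpr hn)
      exact hK1 n s (by omega)
    · rw [hN1 n (by omega)]
      simp
  have hq2 : ∀ n s, B ≤ s → p s b (p n a c) = 0 := by
    intro n s hs
    by_cases hn : n < B0
    · have hle : K2 n ≤ S2 := Finset.le_sup (Finset.mem_range.mpr hn)
      exact hK2 n s (by omega)
    · rw [hN2 n (by omega)]
      simp
  have hq3 : ∀ n s, B ≤ s → p s (p n a b) c = 0 := by
    intro n s hs
    by_cases hn : n < B0
    · have hle : K3 n ≤ S3 := Finset.le_sup (Finset.mem_range.mpr hn)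
      exact hK3 n s (by omega)
    · rw [hN3 n (by omega)]
      simp
  set R := 2*B+4 with hR
  rw [keyA D p hsesq2 hsesq2' a b c B R hR hbc hq1 (fun m hm => hM1 m (by omega)),
    keyA D p hsesq2 hsesq2' b a c B R hR hac hq2 (fun m hm => hM2 m (by omega)),
    keyB D p hsesq0 hsesq1 a b c B R hR hab hq3 (fun n hn => hM3 n (by omega))]
  -- apply conformal Jacobi inside
  have hsplit : ∀ n ∈ range R, ∀ m ∈ range R,
      (((m+n+2).factorial : ℝ)⁻¹) • ((-D)^(m+n+2)) (p m a (p n b c))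
        = (∑ j ∈ range (m+1),
            ((((m+n+2).factorial : ℝ)⁻¹) * (((m.choose j : ℕ)) : ℝ))
              • ((-D)^(m+n+2)) (p (m+n-j) (p j a b) c))
          + (((m+n+2).factorial : ℝ)⁻¹) • ((-D)^(m+n+2)) (p n b (p m a c)) := by
    intro n _ m _
    rw [hjac a b c m n, map_add ((-D)^(m+n+2)), smul_add]
    congr 1
    rw [map_sum ((-D)^(m+n+2)) _ (range (m+1)), Finset.smul_sum]
    refine Finset.sum_congr rfl fun j _ => ?_
    rw [← Nat.cast_smul_eq_nsmul ℝ (m.choose j), map_smul ((-D)^(m+n+2)), smul_smul]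
  have hLHS : (∑ n ∈ range R, ∑ m ∈ range R,
      (((m+n+2).factorial : ℝ)⁻¹) • ((-D)^(m+n+2)) (p m a (p n b c)))
      = (∑ n ∈ range R, ∑ m ∈ range R, ∑ j ∈ range (m+1),
          ((((m+n+2).factorial : ℝ)⁻¹) * (((m.choose j : ℕ)) : ℝ))
            • ((-D)^(m+n+2)) (p (m+n-j) (p j a b) c))
        + (∑ n ∈ range R, ∑ m ∈ range R,
          (((m+n+2).factorial : ℝ)⁻¹) • ((-D)^(m+n+2)) (p n b (p m a c))) := by
    rw [← Finset.sum_add_distrib]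
    refine Finset.sum_congr rfl fun n hn => ?_
    rw [← Finset.sum_add_distrib]
    exact Finset.sum_congr rfl fun m hm => hsplit n hn m hm
  rw [hLHS]
  congr 1
  · -- first piece equals the keyB normal form
    rw [Finset.sum_comm]
    have step1 : ∀ m ∈ range R,
        (∑ n ∈ range R, ∑ j ∈ range (m+1),
          ((((m+n+2).factorial : ℝ)⁻¹) * (((m.choose j : ℕ)) : ℝ))
            • ((-D)^(m+n+2)) (p (m+n-j) (p j a b) c))
        = ∑ j ∈ range R, ∑ n ∈ range R,
          ((((m+n+2).factorial : ℝ)⁻¹) * (((m.choose j : ℕ)) : ℝ))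
            • ((-D)^(m+n+2)) (p (m+n-j) (p j a b) c) := by
      intro m hm
      rw [mem_range] at hm
      rw [Finset.sum_comm]
      refine Finset.sum_subset (Finset.range_subset_range.mpr (by omega)) ?_
      intro j _ hj
      rw [mem_range, not_lt] at hj
      refine Finset.sum_eq_zero fun n _ => ?_
      rw [Nat.choose_eq_zero_of_lt (by omega)]
      simp
    rw [Finset.sum_congr rfl step1, Finset.sum_comm]
    refine Finset.sum_congr rfl fun j hj => ?_
    rw [mem_range] at hj
    rw [shift_sum _ j R (by omega)
      (fun m hm => Finset.sum_eq_zero fun n _ => by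
        rw [Nat.choose_eq_zero_of_lt (by omega)]
        simp)
      (fun k hk => Finset.sum_eq_zero fun n _ => by
        by_cases hjB : B ≤ j
        · rw [hab j hjB]
          simp
        · rw [hq3 j ((j+k)+n-j) (by omega)]
          simp)]
    have E : ∀ k ∈ range R,
        (∑ n ∈ range R,
          (((((j+k)+n+2).factorial : ℝ)⁻¹) * ((((j+k).choose j : ℕ)) : ℝ))
            • ((-D)^((j+k)+n+2)) (p ((j+k)+n-j) (p j a b) c))
        = ∑ n ∈ range R,
          ((((((k+n))+j+2).factorial : ℝ)⁻¹) * ((((j+k).choose j : ℕ)) : ℝ))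
            • ((-D)^((k+n)+j+2)) (p (k+n) (p j a b) c) := by
      intro k _
      refine Finset.sum_congr rfl fun n _ => ?_
      rw [show (j+k)+n-j = k+n by omega, show (j+k)+n+2 = (k+n)+j+2 by omega]
    rw [Finset.sum_congr rfl E]
    rw [diag_sum (fun k n =>
        ((((((k+n))+j+2).factorial : ℝ)⁻¹) * ((((j+k).choose j : ℕ)) : ℝ))
          • ((-D)^((k+n)+j+2)) (p (k+n) (p j a b) c)) R
      (fun k n hkn => by
        have h0 := hq3 j (k+n) (by omega)
        simp [h0])]
    refine Finset.sum_congr rfl fun t ht => ?_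
    have E2 : ∀ k ∈ range (t+1),
        ((((((k+(t-k)))+j+2).factorial : ℝ)⁻¹) * ((((j+k).choose j : ℕ)) : ℝ))
          • ((-D)^((k+(t-k))+j+2)) (p (k+(t-k)) (p j a b) c)
        = ((((j+k).choose j : ℕ)) : ℝ)
            • ((((t+j+2).factorial : ℝ)⁻¹)
              • ((-D)^(t+j+2)) (p t (p j a b) c)) := by
      intro k hk
      rw [mem_range] at hk
      rw [show k+(t-k) = t by omega, smul_smul, mul_comm]
    rw [Finset.sum_congr rfl E2, ← Finset.sum_smul, ← Nat.cast_sum, hockey j t, smul_smul]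
  · -- second piece equals the keyA normal form for b,(a,c)
    rw [Finset.sum_comm]
    refine Finset.sum_congr rfl fun m hm => ?_
    refine Finset.sum_congr rfl fun n hn => ?_
    rw [show m+n+2 = n+m+2 by omega]

end JACOBI

theorem stmt15
    (V : Type*) [AddCommGroup V] [Module ℝ V]
    (D : Module.End ℝ V)
    (p : ℕ → V →ₗ[ℝ] V →ₗ[ℝ] V)                  -- j-th products a_{(j)}b
    (hfin : ∀ f g : V, ∃ N, ∀ j ≥ N, p j f g = 0)
    -- sesquilinearity:
    (hsesq0 : ∀ f g : V, p 0 (D f) g = 0)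
    (hsesq1 : ∀ (f g : V) (j : ℕ),
      p (j + 1) (D f) g = -(((j : ℝ) + 1)) • p j f g)
    (hsesq2 : ∀ f g : V, p 0 f (D g) = D (p 0 f g))
    (hsesq2' : ∀ (f g : V) (j : ℕ),
      p (j + 1) f (D g) = D (p (j + 1) f g) + (((j : ℝ) + 1)) • p j f g)
    -- skew-symmetry [a_λ b] = −[b_{−∂−λ} a]:
    (hskew : ∀ (f g : V) (j : ℕ),
      p j f g = -((-1 : ℝ) ^ j) •
        ∑ᶠ i : ℕ, ((i.factorial : ℝ)⁻¹) • ((-D) ^ i) (p (j + i) g f))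
    -- Jacobi identity [a_λ [b_μ c]] = [b_μ [a_λ c]] + [[a_λ b]_{λ+μ} c]:
    (hjac : ∀ (f g h : V) (m n : ℕ),
      p m f (p n g h) =
        (∑ j ∈ Finset.range (m + 1), (m.choose j) • p (m + n - j) (p j f g) h)
          + p n g (p m f h)) :
    -- [a,b] := ∫_{−∂}^0 [a_λ b]dλ is a Lie bracket:
    (let br : V → V → V := fun a b =>
      - ∑ᶠ j : ℕ, (((j + 1).factorial : ℝ)⁻¹) • ((-D) ^ (j + 1)) (p j a b)
     -- bilinearity:
     (∀ a b c : V, br (a + b) c = br a c + br b c) ∧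
     (∀ a b c : V, br a (b + c) = br a b + br a c) ∧
     (∀ (r : ℝ) (a b : V), br (r • a) b = r • br a b) ∧
     (∀ (r : ℝ) (a b : V), br a (r • b) = r • br a b) ∧
     -- skew-symmetry:
     (∀ a b : V, br a b = - br b a) ∧
     -- Jacobi identity:
     (∀ a b c : V, br a (br b c) = br (br a b) c + br b (br a c))) := by
  exact ⟨fun a b c => br_addl D p hfin a b c,
    fun a b c => br_addr D p hfin a b c,
    fun r a b => br_smull D p hfin r a b,
    fun r a b => br_smulr D p hfin r a b,
    fun a b => br_skew D p hfin hskew a b,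
    fun a b c => br_jacobi D p hfin hsesq0 hsesq1 hsesq2 hsesq2' hjac a b c⟩
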